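/- Suppose n is odd. A divisor δ ∈ 𝒟 lies in 𝒫 = 𝒫₁ + 𝒫₂ + 𝒫₃ if and only if: (1) Σ_{v∈V} ι(v)·δ(v) = 0 in ℤ/nℤ, where ι assigns to each of z_i^j, x_i^j, y_i^j its index i ∈ ℤ/nℤ; and (2) for each 1 ≤ j ≤ t, Σ_{i∈ℤ/nℤ} δ(x_i^j) ≡ Σ_{i∈ℤ/nℤ} δ(y_i^j) modulo n. -/

import Mathlib

open scoped BigOperators

section Setup

variable (n s t : ℕ) [NeZero n]

/-- The vertex set: `Sum.inl (j,i)` is `z_i^j`, `Sum.inr (Sum.inl (j,i))` is `x_i^j`,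
`Sum.inr (Sum.inr (j,i))` is `y_i^j`. -/
abbrev Vrt := (Fin s × ZMod n) ⊕ ((Fin t × ZMod n) ⊕ (Fin t × ZMod n))

def zv (j : Fin s) (i : ZMod n) : Vrt n s t := Sum.inl (j, i)
def xv (j : Fin t) (i : ZMod n) : Vrt n s t := Sum.inr (Sum.inl (j, i))
def yv (j : Fin t) (i : ZMod n) : Vrt n s t := Sum.inr (Sum.inr (j, i))

/-- The involution σ₁. -/
def sig1 : Vrt n s t → Vrt n s t
  | Sum.inl (j, i) => Sum.inl (j, 1 - i)
  | Sum.inr (Sum.inl (j, i)) => Sum.inr (Sum.inr (j, 1 - i))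
  | Sum.inr (Sum.inr (j, i)) => Sum.inr (Sum.inl (j, 1 - i))

/-- The involution σ₂. -/
def sig2 : Vrt n s t → Vrt n s t
  | Sum.inl (j, i) => Sum.inl (j, 2 - i)
  | Sum.inr (Sum.inl (j, i)) => Sum.inr (Sum.inr (j, 2 - i))
  | Sum.inr (Sum.inr (j, i)) => Sum.inr (Sum.inl (j, 2 - i))

/-- The rotation ρ = σ₂ ∘ σ₁. -/
def rho : Vrt n s t → Vrt n s t := sig2 n s t ∘ sig1 n s t

/-- The index of a vertex, an element of ℤ/nℤ. -/
def idx : Vrt n s t → ZMod n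
  | Sum.inl (_, i) => i
  | Sum.inr (Sum.inl (_, i)) => i
  | Sum.inr (Sum.inr (_, i)) => i

/-- The group 𝒟 of divisors of total degree zero. -/
def DivD : AddSubgroup (Vrt n s t → ℤ) where
  carrier := {δ | ∑ v, δ v = 0}
  zero_mem' := by simp
  add_mem' := by
    intro a b ha hb
    simp only [Set.mem_setOf_eq, Pi.add_apply, Finset.sum_add_distrib] at *
    simp [ha, hb]
  neg_mem' := by
    intro a ha
    simp only [Set.mem_setOf_eq, Pi.neg_apply, Finset.sum_neg_distrib] at *
    simp [ha]

/-- 𝒫₁ : degree-zero divisors invariant under σ₁ with even values at σ₁-fixed vertices. -/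
def Pgp1 : AddSubgroup (Vrt n s t → ℤ) where
  carrier := {δ | (∑ v, δ v = 0) ∧ (∀ v, δ (sig1 n s t v) = δ v) ∧
      ∀ v, sig1 n s t v = v → Even (δ v)}
  zero_mem' := ⟨by simp, fun _ => rfl, fun _ _ => ⟨0, by simp⟩⟩
  add_mem' := by
    rintro a b ⟨ha0, ha1, ha2⟩ ⟨hb0, hb1, hb2⟩
    refine ⟨?_, fun v => by simp [ha1 v, hb1 v], fun v hv => (ha2 v hv).add (hb2 v hv)⟩
    simp [Finset.sum_add_distrib, ha0, hb0]
  neg_mem' := by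
    rintro a ⟨ha0, ha1, ha2⟩
    exact ⟨by simp [Finset.sum_neg_distrib, ha0], fun v => by simp [ha1 v],
      fun v hv => (ha2 v hv).neg⟩

/-- 𝒫₂ : degree-zero divisors invariant under σ₂ with even values at σ₂-fixed vertices. -/
def Pgp2 : AddSubgroup (Vrt n s t → ℤ) where
  carrier := {δ | (∑ v, δ v = 0) ∧ (∀ v, δ (sig2 n s t v) = δ v) ∧
      ∀ v, sig2 n s t v = v → Even (δ v)}
  zero_mem' := ⟨by simp, fun _ => rfl, fun _ _ => ⟨0, by simp⟩⟩
  add_mem' := by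
    rintro a b ⟨ha0, ha1, ha2⟩ ⟨hb0, hb1, hb2⟩
    refine ⟨?_, fun v => by simp [ha1 v, hb1 v], fun v hv => (ha2 v hv).add (hb2 v hv)⟩
    simp [Finset.sum_add_distrib, ha0, hb0]
  neg_mem' := by
    rintro a ⟨ha0, ha1, ha2⟩
    exact ⟨by simp [Finset.sum_neg_distrib, ha0], fun v => by simp [ha1 v],
      fun v hv => (ha2 v hv).neg⟩

/-- 𝒫₃ : degree-zero divisors invariant under ρ. -/
def Pgp3 : AddSubgroup (Vrt n s t → ℤ) where
  carrier := {δ | (∑ v, δ v = 0) ∧ ∀ v, δ (rho n s t v) = δ v}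
  zero_mem' := ⟨by simp, fun _ => rfl⟩
  add_mem' := by
    rintro a b ⟨ha0, ha1⟩ ⟨hb0, hb1⟩
    exact ⟨by simp [Finset.sum_add_distrib, ha0, hb0], fun v => by simp [ha1 v, hb1 v]⟩
  neg_mem' := by
    rintro a ⟨ha0, ha1⟩
    exact ⟨by simp [Finset.sum_neg_distrib, ha0], fun v => by simp [ha1 v]⟩

/-- 𝒫₀ : degree-zero divisors constant on each D_n-orbit with even values at the z-vertices
(the pullbacks of degree-zero divisors on G/D_n). -/
def Pgp0 : AddSubgroup (Vrt n s t → ℤ) where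
  carrier := {δ | (∑ v, δ v = 0) ∧
      (∀ j i₁ i₂, δ (zv n s t j i₁) = δ (zv n s t j i₂)) ∧
      (∀ j i₁ i₂, δ (xv n s t j i₁) = δ (xv n s t j i₂)) ∧
      (∀ j i₁ i₂, δ (xv n s t j i₁) = δ (yv n s t j i₂)) ∧
      ∀ j i, Even (δ (zv n s t j i))}
  zero_mem' := ⟨by simp, fun _ _ _ => rfl, fun _ _ _ => rfl, fun _ _ _ => rfl,
    fun _ _ => ⟨0, by simp⟩⟩
  add_mem' := by
    rintro a b ⟨ha0, ha1, ha2, ha3, ha4⟩ ⟨hb0, hb1, hb2, hb3, hb4⟩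
    exact ⟨by simp [Finset.sum_add_distrib, ha0, hb0],
      fun j i₁ i₂ => by simp [ha1 j i₁ i₂, hb1 j i₁ i₂],
      fun j i₁ i₂ => by simp [ha2 j i₁ i₂, hb2 j i₁ i₂],
      fun j i₁ i₂ => by simp [ha3 j i₁ i₂, hb3 j i₁ i₂],
      fun j i => (ha4 j i).add (hb4 j i)⟩
  neg_mem' := by
    rintro a ⟨ha0, ha1, ha2, ha3, ha4⟩
    exact ⟨by simp [Finset.sum_neg_distrib, ha0],
      fun j i₁ i₂ => by simp [ha1 j i₁ i₂],
      fun j i₁ i₂ => by simp [ha2 j i₁ i₂],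
      fun j i₁ i₂ => by simp [ha3 j i₁ i₂],
      fun j i => (ha4 j i).neg⟩

/-- σ₁ as a permutation of the vertex set. -/
def sig1e : Equiv.Perm (Vrt n s t) where
  toFun := sig1 n s t
  invFun := sig1 n s t
  left_inv := by rintro (⟨j, i⟩ | ⟨j, i⟩ | ⟨j, i⟩) <;> simp [sig1, sub_sub_cancel]
  right_inv := by rintro (⟨j, i⟩ | ⟨j, i⟩ | ⟨j, i⟩) <;> simp [sig1, sub_sub_cancel]

/-- σ₂ as a permutation of the vertex set. -/
def sig2e : Equiv.Perm (Vrt n s t) where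
  toFun := sig2 n s t
  invFun := sig2 n s t
  left_inv := by rintro (⟨j, i⟩ | ⟨j, i⟩ | ⟨j, i⟩) <;> simp [sig2, sub_sub_cancel]
  right_inv := by rintro (⟨j, i⟩ | ⟨j, i⟩ | ⟨j, i⟩) <;> simp [sig2, sub_sub_cancel]

/-- The dihedral group D_n, realized as the subgroup of permutations of the vertex set
generated by σ₁ and σ₂. -/
def dihedral : Subgroup (Equiv.Perm (Vrt n s t)) :=
  Subgroup.closure {sig1e n s t, sig2e n s t}

/-- The multigraph with `w u v` edges between `u` and `v`, seen as a simple graph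
recording adjacency. -/
def wGraph (w : Vrt n s t → Vrt n s t → ℕ) : SimpleGraph (Vrt n s t) where
  Adj u v := u ≠ v ∧ (w u v ≠ 0 ∨ w v u ≠ 0)
  symm := ⟨by rintro u v ⟨h1, h2⟩; exact ⟨h1.symm, h2.symm⟩⟩
  loopless := ⟨by rintro v ⟨h, _⟩; exact h rfl⟩

/-- The firing divisor `L_v`. -/
def fire (w : Vrt n s t → Vrt n s t → ℕ) (v u : Vrt n s t) : ℤ :=
  if u = v then -(∑ x, (w v x : ℤ)) else (w u v : ℤ)

/-- The lattice ℒ generated by the firing divisors. -/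
def FireLat (w : Vrt n s t → Vrt n s t → ℕ) : AddSubgroup (Vrt n s t → ℤ) :=
  AddSubgroup.closure (Set.range (fire n s t w))

/-- Harmonicity: no nontrivial element of D_n fixes both endpoints of an edge. -/
def Harmonic (w : Vrt n s t → Vrt n s t → ℕ) : Prop :=
  ∀ g ∈ dihedral n s t, g ≠ 1 →
    ∀ u v : Vrt n s t, (wGraph n s t w).Adj u v → ¬(g u = u ∧ g v = v)

/-- The critical group K(G) = 𝒟/ℒ. -/
abbrev KGrp (w : Vrt n s t → Vrt n s t → ℕ) :=
  DivD n s t ⧸ ((FireLat n s t w).addSubgroupOf (DivD n s t))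

/-- The image (𝒫 + ℒ)/ℒ of a subgroup 𝒫 of divisors in the critical group. -/
def Jsub (w : Vrt n s t → Vrt n s t → ℕ) (P : AddSubgroup (Vrt n s t → ℤ)) :
    AddSubgroup (KGrp n s t w) :=
  ((P ⊔ FireLat n s t w).addSubgroupOf (DivD n s t)).map
    (QuotientAddGroup.mk' ((FireLat n s t w).addSubgroupOf (DivD n s t)))

/-- The sum map Φ : J₁ × J₂ × J₃ → K(G). -/
def Phi (w : Vrt n s t → Vrt n s t → ℕ) :
    (Jsub n s t w (Pgp1 n s t) × Jsub n s t w (Pgp2 n s t) × Jsub n s t w (Pgp3 n s t)) →+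
      KGrp n s t w where
  toFun p := (p.1 : KGrp n s t w) + (p.2.1 : KGrp n s t w) + (p.2.2 : KGrp n s t w)
  map_zero' := by simp
  map_add' := by
    intro a b
    simp only [Prod.fst_add, Prod.snd_add, AddSubgroup.coe_add]
    abel

/-- The subgroup ℒ′ of ℒ. -/
def FireLat' (w : Vrt n s t → Vrt n s t → ℕ) : AddSubgroup (Vrt n s t → ℤ) :=
  AddSubgroup.closure
    ({d | ∃ j i, d = fire n s t w (zv n s t j i)} ∪
     {d | ∃ j i₁ i₂, d = fire n s t w (xv n s t j i₁) + fire n s t w (yv n s t j i₂)} ∪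
     {d | ∃ j, d = ∑ i, fire n s t w (xv n s t j i)} ∪
     {d | ∃ j, d = ∑ i, fire n s t w (yv n s t j i)})

end Setup

set_option linter.unusedSectionVars false

namespace MemPAux

variable {n : ℕ} [NeZero n]

lemma const_of_step {M : Type*} (f : ZMod n → M) (h : ∀ i, f (i + 1) = f i) (i : ZMod n) :
    f i = f 0 := by
  have key : ∀ m : ℕ, f (m : ZMod n) = f 0 := by
    intro m
    induction m with
    | zero => simp
    | succ k ih => rw [Nat.cast_succ, h, ih]
  calc f i = f ((i.val : ℕ) : ZMod n) := by rw [ZMod.natCast_rightInverse i]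
  _ = f 0 := key _

lemma sum_zmod_range {M : Type*} [AddCommMonoid M] (f : ZMod n → M) :
    ∑ i : ZMod n, f i = ∑ m ∈ Finset.range n, f (m : ZMod n) := by
  refine Finset.sum_nbij' (fun i => i.val) (fun m => (m : ZMod n)) ?_ ?_ ?_ ?_ ?_
  · intro a _; exact Finset.mem_range.2 (ZMod.val_lt a)
  · intro m _; exact Finset.mem_univ _
  · intro a _; exact ZMod.natCast_rightInverse a
  · intro m hm; exact ZMod.val_natCast_of_lt (Finset.mem_range.1 hm)
  · intro a _; rw [ZMod.natCast_rightInverse a]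

lemma unit2 (hodd : Odd n) : IsUnit (2 : ZMod n) := by
  have := (ZMod.isUnit_iff_coprime 2 n).2 (Nat.coprime_two_left.2 hodd)
  simpa using this

lemma add_self_cancel (hodd : Odd n) {x : ZMod n} (h : x + x = 0) : x = 0 := by
  have h2 : (2 : ZMod n) * x = 0 := by linear_combination h
  rcases (unit2 hodd) with ⟨u, hu⟩
  calc x = u⁻¹ * (u * x) := by rw [← mul_assoc]; simp
  _ = 0 := by rw [hu, h2, mul_zero]

lemma add_self_eq (hodd : Odd n) {x y : ZMod n} (h : x + x = y + y) : x = y := by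
  have := add_self_cancel hodd (x := x - y) (by ring_nf; linear_combination h)
  exact sub_eq_zero.mp this

lemma sum_univ_zmod (hodd : Odd n) : ∑ i : ZMod n, (i : ZMod n) = 0 := by
  have h : ∑ i : ZMod n, (i : ZMod n) = ∑ i : ZMod n, -i := by
    exact (Equiv.sum_comp (Equiv.neg (ZMod n)) (fun i => i)).symm
  apply add_self_cancel hodd
  nth_rewrite 2 [h]
  rw [← Finset.sum_add_distrib]
  simp


def psum (Δ : ZMod n → ℤ) (i : ZMod n) : ℤ := ∑ k ∈ Finset.range i.val, Δ ((k + 1 : ℕ) : ZMod n)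

lemma psum_zero (Δ : ZMod n → ℤ) : psum Δ 0 = 0 := by simp [psum]

lemma psum_succ (Δ : ZMod n → ℤ) (hΔ : ∑ k : ZMod n, Δ k = 0) (i : ZMod n) :
    psum Δ (i + 1) = psum Δ i + Δ (i + 1) := by
  obtain ⟨m, hm, rfl⟩ : ∃ m : ℕ, m < n ∧ ((m : ZMod n) : ZMod n) = i :=
    ⟨i.val, ZMod.val_lt i, ZMod.natCast_rightInverse i⟩
  have hval : ((m : ZMod n)).val = m := ZMod.val_natCast_of_lt hm
  rcases eq_or_lt_of_le (Nat.succ_le_of_lt hm) with he | hlt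
  · -- m + 1 = n : wraparound
    have hen : m + 1 = n := he
    have h1 : ((m : ZMod n) + 1 : ZMod n) = 0 := by
      have : (((m+1 : ℕ)) : ZMod n) = ((n : ℕ) : ZMod n) := by rw [hen]
      simpa using this
    rw [h1, psum_zero]
    have hrange : ∑ j ∈ Finset.range (m+1), Δ ((j : ℕ) : ZMod n) = 0 := by
      rw [hen, ← sum_zmod_range]; exact hΔ
    rw [Finset.sum_range_succ'] at hrange
    simp only [Nat.cast_zero] at hrange
    rw [psum, hval]
    linarith [hrange]
  · -- m + 1 < n
    have h2 : ((m : ZMod n) + 1 : ZMod n) = ((m + 1 : ℕ) : ZMod n) := by push_cast; ring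
    have hval2 : (((m + 1 : ℕ) : ZMod n)).val = m + 1 := ZMod.val_natCast_of_lt hlt
    rw [h2, psum, psum, hval, hval2, Finset.sum_range_succ]

lemma psum_one (Δ : ZMod n → ℤ) (hΔ : ∑ k : ZMod n, Δ k = 0) : psum Δ 1 = Δ 1 := by
  have := psum_succ Δ hΔ 0
  simpa [psum_zero] using this

lemma psum_symm (Δ : ZMod n → ℤ) (hΔ : ∑ k : ZMod n, Δ k = 0)
    (hanti : ∀ k, Δ (2 - k) = -Δ k) (i : ZMod n) : psum Δ (1 - i) = psum Δ i := by
  have hΔ1 : Δ 1 = 0 := by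
    have := hanti 1
    norm_num at this
    linarith [this]
  have key : ∀ j : ZMod n, psum Δ j - psum Δ (1 - j) = 0 := by
    intro j
    have step : ∀ a : ZMod n,
        psum Δ (a + 1) - psum Δ (1 - (a + 1)) = psum Δ a - psum Δ (1 - a) := by
      intro a
      have e1 : psum Δ (a + 1) = psum Δ a + Δ (a + 1) := psum_succ Δ hΔ a
      have e2 : psum Δ (1 - a) = psum Δ (1 - (a + 1)) + Δ (1 - a) := by
        have := psum_succ Δ hΔ (-a)
        have h3 : -a + 1 = 1 - a := by ring
        rw [h3] at this
        have h4 : (1 : ZMod n) - (a + 1) = -a := by ring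
        rw [h4]
        exact this
      have h5 : Δ (1 - a) = -Δ (a + 1) := by
        have := hanti (a + 1)
        have h6 : (2 : ZMod n) - (a + 1) = 1 - a := by ring
        rw [h6] at this
        linarith [this]
      rw [e1]
      rw [e2] at *
      linarith [h5]
    have := const_of_step (fun j => psum Δ j - psum Δ (1 - j)) step j
    rw [this]
    have : psum Δ (1 - 0) = psum Δ 1 := by norm_num
    rw [this, psum_zero, psum_one Δ hΔ, hΔ1]
    ring
  have := key i
  linarith [this]


lemma double_range (F : ℕ → ℤ) (N : ℕ) :
    ∑ m ∈ Finset.range N, ∑ k ∈ Finset.range m, F k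
      = ∑ k ∈ Finset.range N, ((N - (k+1) : ℕ) : ℤ) * F k := by
  induction N with
  | zero => simp
  | succ N ih =>
    rw [Finset.sum_range_succ, ih, Finset.sum_range_succ]
    have : ∀ k ∈ Finset.range N,
        ((N + 1 - (k+1) : ℕ) : ℤ) * F k = ((N - (k+1) : ℕ) : ℤ) * F k + F k := by
      intro k hk
      have hk' : k < N := Finset.mem_range.1 hk
      have : ((N + 1 - (k+1) : ℕ) : ℤ) = ((N - (k+1) : ℕ) : ℤ) + 1 := by omega
      rw [this]; ring
    rw [Finset.sum_congr rfl this, Finset.sum_add_distrib]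
    simp

lemma psum_total (Δ : ZMod n → ℤ) (hΔ : ∑ k : ZMod n, Δ k = 0) :
    ((∑ i : ZMod n, psum Δ i : ℤ) : ZMod n)
      = -∑ k : ZMod n, (k : ZMod n) * ((Δ k : ℤ) : ZMod n) := by
  have h1 : ∑ i : ZMod n, psum Δ i
      = ∑ m ∈ Finset.range n, ∑ k ∈ Finset.range m, Δ ((k + 1 : ℕ) : ZMod n) := by
    rw [sum_zmod_range]
    refine Finset.sum_congr rfl ?_
    intro m hm
    rw [psum, ZMod.val_natCast_of_lt (Finset.mem_range.1 hm)]
  rw [h1, double_range]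
  push_cast
  have h2 : ∀ k ∈ Finset.range n,
      ((n - (k+1) : ℕ) : ZMod n) * ((Δ ((k+1 : ℕ) : ZMod n) : ℤ) : ZMod n)
        = -(((k+1 : ℕ) : ZMod n) * ((Δ ((k+1 : ℕ) : ZMod n) : ℤ) : ZMod n)) := by
    intro k hk
    have hk' : k < n := Finset.mem_range.1 hk
    have : ((n - (k+1) : ℕ) : ZMod n) = -((k+1 : ℕ) : ZMod n) := by
      have hsum : ((n - (k+1) : ℕ)) + (k+1) = n := by omega
      have : (((n - (k+1) : ℕ) + (k+1) : ℕ) : ZMod n) = ((n : ℕ) : ZMod n) := by rw [hsum]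
      push_cast at this
      simp at this
      push_cast
      linear_combination this
    rw [this]; ring
  rw [Finset.sum_congr rfl (by
    intro k hk
    have := h2 k hk
    push_cast at this ⊢
    exact this)]
  rw [Finset.sum_neg_distrib, neg_inj]
  set G : ℕ → ZMod n := fun m => ((m : ZMod n)) * ((Δ ((m : ℕ) : ZMod n) : ℤ) : ZMod n) with hG
  have hG0 : G 0 = 0 := by simp [hG]
  have hGn : G n = 0 := by simp [hG]
  have e1 : ∑ k ∈ Finset.range n, G (k+1) + G 0 = ∑ m ∈ Finset.range (n+1), G m :=
    (Finset.sum_range_succ' G n).symm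
  have e2 : ∑ m ∈ Finset.range (n+1), G m = ∑ m ∈ Finset.range n, G m + G n :=
    Finset.sum_range_succ G n
  have h3 : ∑ k ∈ Finset.range n, G (k+1) = ∑ m ∈ Finset.range n, G m := by
    rw [hG0, add_zero] at e1
    rw [hGn, add_zero] at e2
    rw [e1, e2]
  have h4 : ∑ m ∈ Finset.range n, G m = ∑ k : ZMod n, k * ((Δ k : ℤ) : ZMod n) :=
    (sum_zmod_range (fun j => j * ((Δ j : ℤ) : ZMod n))).symm
  have h5 : ∑ k ∈ Finset.range n, (((k+1 : ℕ) : ZMod n) * ((Δ ((k+1:ℕ) : ZMod n) : ℤ) : ZMod n))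
      = ∑ k ∈ Finset.range n, G (k+1) := by
    refine Finset.sum_congr rfl fun k _ => ?_
    simp [hG]
  calc ∑ k ∈ Finset.range n, ((k : ZMod n) + 1) * ((Δ ((k : ZMod n) + 1) : ℤ) : ZMod n)
      = ∑ k ∈ Finset.range n, (((k+1 : ℕ) : ZMod n) * ((Δ ((k+1:ℕ) : ZMod n) : ℤ) : ZMod n)) := by
        refine Finset.sum_congr rfl fun k _ => ?_
        push_cast
        ring_nf
  _ = ∑ k : ZMod n, k * ((Δ k : ℤ) : ZMod n) := by rw [h5, h3, h4]

lemma sum_parity (S : ZMod n → ℤ) (φ : ZMod n → ZMod n) (i₀ : ZMod n)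
    (hinv : ∀ i, φ (φ i) = i) (hfix : ∀ i, φ i = i → i = i₀) (hfix0 : φ i₀ = i₀)
    (hS : ∀ i, S (φ i) = S i) : Even (∑ i : ZMod n, S i - S i₀) := by
  have hchar : ∀ x : ZMod 2, x + x = 0 := by decide
  have h2 : ((∑ i : ZMod n, S i - S i₀ : ℤ) : ZMod 2) = 0 := by
    push_cast
    have hmain : ∑ i : ZMod n, ((S i : ℤ) : ZMod 2) = ((S i₀ : ℤ) : ZMod 2) := by
      rw [← Finset.add_sum_erase _ _ (Finset.mem_univ i₀)]
      have hz : ∑ i ∈ Finset.univ.erase i₀, ((S i : ℤ) : ZMod 2) = 0 := by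
        refine Finset.sum_involution (fun a _ => φ a) ?_ ?_ ?_ ?_
        · intro a _
          rw [hS a]
          exact hchar _
        · intro a ha _
          intro hcon
          exact (Finset.mem_erase.1 ha).1 (hfix a hcon)
        · intro a ha
          refine Finset.mem_erase.2 ⟨?_, Finset.mem_univ _⟩
          intro hcon
          have : a = φ i₀ := by rw [← hcon, hinv]
          rw [hfix0] at this
          exact (Finset.mem_erase.1 ha).1 this
        · intro a _
          exact hinv a
      rw [hz, add_zero]
    rw [hmain]
    ring
  have := (ZMod.intCast_zmod_eq_zero_iff_dvd _ 2).1 h2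
  exact even_iff_two_dvd.2 (by exact_mod_cast this)

end MemPAux

namespace MemPMain
open MemPAux

variable (n s t : ℕ) [NeZero n]

def i0 (n : ℕ) : ZMod n := (((n+1)/2 : ℕ) : ZMod n)

lemma two_i0 (hodd : Odd n) : i0 n + i0 n = 1 := by
  obtain ⟨k, hk⟩ := hodd
  have h : (n+1)/2 + (n+1)/2 = n + 1 := by omega
  have : ((( (n+1)/2 + (n+1)/2 : ℕ)) : ZMod n) = ((n + 1 : ℕ) : ZMod n) := by rw [h]
  push_cast at this
  simpa [i0] using this

lemma eq_i0 (hodd : Odd n) {i : ZMod n} (h : i + i = 1) : i = i0 n :=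
  add_self_eq hodd (by rw [h, two_i0 n hodd])

lemma eq_one_of (hodd : Odd n) {i : ZMod n} (h : i + i = 2) : i = 1 :=
  add_self_eq hodd (by rw [h]; ring)

lemma idx_sig1 (v : Vrt n s t) : idx n s t (sig1 n s t v) = 1 - idx n s t v := by
  rcases v with ⟨j,i⟩ | ⟨j,i⟩ | ⟨j,i⟩ <;> rfl

lemma idx_sig2 (v : Vrt n s t) : idx n s t (sig2 n s t v) = 2 - idx n s t v := by
  rcases v with ⟨j,i⟩ | ⟨j,i⟩ | ⟨j,i⟩ <;> rfl

lemma rho_z (j : Fin s) (i : ZMod n) :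
    rho n s t (zv n s t j i) = zv n s t j (i + 1) := by
  simp only [rho, zv, Function.comp_apply, sig1, sig2, Sum.inl.injEq, Prod.mk.injEq, true_and]
  ring

lemma rho_x (j : Fin t) (i : ZMod n) :
    rho n s t (xv n s t j i) = xv n s t j (i + 1) := by
  simp only [rho, xv, Function.comp_apply, sig1, sig2, Sum.inr.injEq, Sum.inl.injEq,
    Prod.mk.injEq, true_and]
  ring

lemma rho_y (j : Fin t) (i : ZMod n) :
    rho n s t (yv n s t j i) = yv n s t j (i + 1) := by
  simp only [rho, yv, Function.comp_apply, sig1, sig2, Sum.inr.injEq, Prod.mk.injEq, true_and]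
  ring

lemma sig1_fixed (hodd : Odd n) (v : Vrt n s t) (h : sig1 n s t v = v) :
    ∃ j, v = zv n s t j (i0 n) := by
  rcases v with ⟨j,i⟩ | ⟨j,i⟩ | ⟨j,i⟩
  · refine ⟨j, ?_⟩
    simp only [sig1, Sum.inl.injEq, Prod.mk.injEq, true_and] at h
    have : i + i = 1 := by linear_combination -h
    rw [zv, eq_i0 n hodd this]
  · simp [sig1] at h
  · simp [sig1] at h

lemma sig2_fixed (hodd : Odd n) (v : Vrt n s t) (h : sig2 n s t v = v) :
    ∃ j, v = zv n s t j 1 := by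
  rcases v with ⟨j,i⟩ | ⟨j,i⟩ | ⟨j,i⟩
  · refine ⟨j, ?_⟩
    simp only [sig2, Sum.inl.injEq, Prod.mk.injEq, true_and] at h
    have : i + i = 2 := by linear_combination -h
    rw [zv, eq_one_of n hodd this]
  · simp [sig2] at h
  · simp [sig2] at h

end MemPMain
namespace MemPMain
open MemPAux

section Fwd
variable (n s t : ℕ) [NeZero n]

lemma cond1_P1 (hodd : Odd n) (a : Vrt n s t → ℤ) (ha0 : ∑ v, a v = 0)
    (ha1 : ∀ v, a (sig1 n s t v) = a v) :
    (∑ v, idx n s t v * ((a v : ℤ) : ZMod n)) = 0 := by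
  set X := ∑ v, idx n s t v * ((a v : ℤ) : ZMod n) with hX
  have h1 : X = ∑ v, idx n s t (sig1e n s t v) * ((a (sig1e n s t v) : ℤ) : ZMod n) :=
    (Equiv.sum_comp (sig1e n s t) (fun v => idx n s t v * ((a v : ℤ) : ZMod n))).symm
  have h2 : ∀ v, idx n s t (sig1e n s t v) * ((a (sig1e n s t v) : ℤ) : ZMod n)
      = (1 - idx n s t v) * ((a v : ℤ) : ZMod n) := by
    intro v
    have e1 : sig1e n s t v = sig1 n s t v := rfl
    rw [e1, idx_sig1, ha1]
  rw [Finset.sum_congr rfl (fun v _ => h2 v)] at h1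
  have h3 : ∑ v, ((1 : ZMod n) - idx n s t v) * ((a v : ℤ) : ZMod n)
      = (((∑ v, a v : ℤ)) : ZMod n) - X := by
    rw [Finset.sum_congr rfl (fun v _ => by ring :
      ∀ v ∈ Finset.univ, ((1 : ZMod n) - idx n s t v) * ((a v : ℤ) : ZMod n)
        = ((a v : ℤ) : ZMod n) - idx n s t v * ((a v : ℤ) : ZMod n)),
      Finset.sum_sub_distrib]
    push_cast
    rfl
  rw [h3, ha0] at h1
  push_cast at h1
  apply add_self_cancel hodd
  linear_combination h1

lemma cond1_P2 (hodd : Odd n) (a : Vrt n s t → ℤ) (ha0 : ∑ v, a v = 0)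
    (ha1 : ∀ v, a (sig2 n s t v) = a v) :
    (∑ v, idx n s t v * ((a v : ℤ) : ZMod n)) = 0 := by
  set X := ∑ v, idx n s t v * ((a v : ℤ) : ZMod n) with hX
  have h1 : X = ∑ v, idx n s t (sig2e n s t v) * ((a (sig2e n s t v) : ℤ) : ZMod n) :=
    (Equiv.sum_comp (sig2e n s t) (fun v => idx n s t v * ((a v : ℤ) : ZMod n))).symm
  have h2 : ∀ v, idx n s t (sig2e n s t v) * ((a (sig2e n s t v) : ℤ) : ZMod n)
      = (2 - idx n s t v) * ((a v : ℤ) : ZMod n) := by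
    intro v
    have e1 : sig2e n s t v = sig2 n s t v := rfl
    rw [e1, idx_sig2, ha1]
  rw [Finset.sum_congr rfl (fun v _ => h2 v)] at h1
  have h3 : ∑ v, ((2 : ZMod n) - idx n s t v) * ((a v : ℤ) : ZMod n)
      = 2 * (((∑ v, a v : ℤ)) : ZMod n) - X := by
    rw [Finset.sum_congr rfl (fun v _ => by ring :
      ∀ v ∈ Finset.univ, ((2 : ZMod n) - idx n s t v) * ((a v : ℤ) : ZMod n)
        = 2 * ((a v : ℤ) : ZMod n) - idx n s t v * ((a v : ℤ) : ZMod n)),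
      Finset.sum_sub_distrib, ← Finset.mul_sum]
    push_cast
    rfl
  rw [h3, ha0] at h1
  push_cast at h1
  apply add_self_cancel hodd
  linear_combination h1

lemma cond2_P1 (a : Vrt n s t → ℤ) (ha1 : ∀ v, a (sig1 n s t v) = a v) (j : Fin t) :
    (∑ i, a (xv n s t j i)) = (∑ i, a (yv n s t j i)) := by
  have h1 : ∀ i : ZMod n, a (xv n s t j i) = a (yv n s t j (1 - i)) := by
    intro i
    have := ha1 (xv n s t j i)
    exact this.symm
  rw [Finset.sum_congr rfl (fun i _ => h1 i)]
  exact Equiv.sum_comp (Equiv.subLeft (1 : ZMod n)) (fun i => a (yv n s t j i))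

lemma cond2_P2 (a : Vrt n s t → ℤ) (ha1 : ∀ v, a (sig2 n s t v) = a v) (j : Fin t) :
    (∑ i, a (xv n s t j i)) = (∑ i, a (yv n s t j i)) := by
  have h1 : ∀ i : ZMod n, a (xv n s t j i) = a (yv n s t j (2 - i)) := by
    intro i
    have := ha1 (xv n s t j i)
    exact this.symm
  rw [Finset.sum_congr rfl (fun i _ => h1 i)]
  exact Equiv.sum_comp (Equiv.subLeft (2 : ZMod n)) (fun i => a (yv n s t j i))

lemma constz_P3 (c : Vrt n s t → ℤ) (hc : ∀ v, c (rho n s t v) = c v) (j : Fin s) (i : ZMod n) :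
    c (zv n s t j i) = c (zv n s t j 0) := by
  refine const_of_step (fun i => c (zv n s t j i)) (fun i => ?_) i
  show c (zv n s t j (i+1)) = c (zv n s t j i)
  rw [← rho_z, hc]

lemma constx_P3 (c : Vrt n s t → ℤ) (hc : ∀ v, c (rho n s t v) = c v) (j : Fin t) (i : ZMod n) :
    c (xv n s t j i) = c (xv n s t j 0) := by
  refine const_of_step (fun i => c (xv n s t j i)) (fun i => ?_) i
  show c (xv n s t j (i+1)) = c (xv n s t j i)
  rw [← rho_x, hc]

lemma consty_P3 (c : Vrt n s t → ℤ) (hc : ∀ v, c (rho n s t v) = c v) (j : Fin t) (i : ZMod n) :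
    c (yv n s t j i) = c (yv n s t j 0) := by
  refine const_of_step (fun i => c (yv n s t j i)) (fun i => ?_) i
  show c (yv n s t j (i+1)) = c (yv n s t j i)
  rw [← rho_y, hc]

lemma cond1_P3 (hodd : Odd n) (c : Vrt n s t → ℤ) (hc : ∀ v, c (rho n s t v) = c v) :
    (∑ v, idx n s t v * ((c v : ℤ) : ZMod n)) = 0 := by
  rw [Fintype.sum_sum_type, Fintype.sum_sum_type, Fintype.sum_prod_type,
    Fintype.sum_prod_type, Fintype.sum_prod_type]
  have hz : ∀ j : Fin s, ∑ i : ZMod n,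
      idx n s t (Sum.inl (j, i)) * ((c (Sum.inl (j, i)) : ℤ) : ZMod n) = 0 := by
    intro j
    have : ∀ i : ZMod n, idx n s t (Sum.inl (j, i)) * ((c (Sum.inl (j, i)) : ℤ) : ZMod n)
        = i * ((c (zv n s t j 0) : ℤ) : ZMod n) := by
      intro i
      rw [show c (Sum.inl (j, i)) = c (zv n s t j 0) from constz_P3 n s t c hc j i]
      rfl
    rw [Finset.sum_congr rfl (fun i _ => this i), ← Finset.sum_mul, sum_univ_zmod hodd,
      zero_mul]
  have hx : ∀ j : Fin t, ∑ i : ZMod n,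
      idx n s t (Sum.inr (Sum.inl (j, i))) * ((c (Sum.inr (Sum.inl (j, i))) : ℤ) : ZMod n) = 0 := by
    intro j
    have : ∀ i : ZMod n, idx n s t (Sum.inr (Sum.inl (j, i)))
          * ((c (Sum.inr (Sum.inl (j, i))) : ℤ) : ZMod n)
        = i * ((c (xv n s t j 0) : ℤ) : ZMod n) := by
      intro i
      rw [show c (Sum.inr (Sum.inl (j, i))) = c (xv n s t j 0) from constx_P3 n s t c hc j i]
      rfl
    rw [Finset.sum_congr rfl (fun i _ => this i), ← Finset.sum_mul, sum_univ_zmod hodd,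
      zero_mul]
  have hy : ∀ j : Fin t, ∑ i : ZMod n,
      idx n s t (Sum.inr (Sum.inr (j, i))) * ((c (Sum.inr (Sum.inr (j, i))) : ℤ) : ZMod n) = 0 := by
    intro j
    have : ∀ i : ZMod n, idx n s t (Sum.inr (Sum.inr (j, i)))
          * ((c (Sum.inr (Sum.inr (j, i))) : ℤ) : ZMod n)
        = i * ((c (yv n s t j 0) : ℤ) : ZMod n) := by
      intro i
      rw [show c (Sum.inr (Sum.inr (j, i))) = c (yv n s t j 0) from consty_P3 n s t c hc j i]
      rfl
    rw [Finset.sum_congr rfl (fun i _ => this i), ← Finset.sum_mul, sum_univ_zmod hodd,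
      zero_mul]
  rw [Finset.sum_congr rfl (fun j _ => hz j), Finset.sum_congr rfl (fun j _ => hx j),
    Finset.sum_congr rfl (fun j _ => hy j)]
  simp

lemma cond2_P3 (c : Vrt n s t → ℤ) (hc : ∀ v, c (rho n s t v) = c v) (j : Fin t) :
    (∑ i, c (xv n s t j i)) ≡ (∑ i, c (yv n s t j i)) [ZMOD (n : ℤ)] := by
  have hx : (∑ i, c (xv n s t j i)) = n * c (xv n s t j 0) := by
    rw [Finset.sum_congr rfl (fun i _ => constx_P3 n s t c hc j i)]
    simp [Finset.card_univ, mul_comm]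
  have hy : (∑ i, c (yv n s t j i)) = n * c (yv n s t j 0) := by
    rw [Finset.sum_congr rfl (fun i _ => consty_P3 n s t c hc j i)]
    simp [Finset.card_univ, mul_comm]
  rw [hx, hy]
  exact (Int.modEq_iff_dvd.2 ⟨c (yv n s t j 0) - c (xv n s t j 0), by ring⟩)

end Fwd
end MemPMain
namespace MemPMain
open MemPAux

section Bwd
variable (n s t : ℕ) [NeZero n] (δ : Vrt n s t → ℤ)

def gam (j : Fin t) : ℤ := ((∑ i, δ (yv n s t j i)) - (∑ i, δ (xv n s t j i))) / (n : ℤ)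

def Dz (j : Fin s) : ZMod n → ℤ := fun k => δ (zv n s t j k) - δ (zv n s t j (2 - k))

def Dxy (j : Fin t) : ZMod n → ℤ :=
  fun k => δ (xv n s t j k) - δ (yv n s t j (2 - k)) + gam n s t δ j

lemma gam_spec (hc2 : ∀ j : Fin t,
      (∑ i, δ (xv n s t j i)) ≡ (∑ i, δ (yv n s t j i)) [ZMOD (n : ℤ)]) (j : Fin t) :
    (n : ℤ) * gam n s t δ j = (∑ i, δ (yv n s t j i)) - (∑ i, δ (xv n s t j i)) := by
  have hdvd : (n : ℤ) ∣ (∑ i, δ (yv n s t j i)) - (∑ i, δ (xv n s t j i)) :=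
    Int.ModEq.dvd (hc2 j)
  exact Int.mul_ediv_cancel' hdvd

lemma sum_sub2 {M : Type*} [AddCommMonoid M] (f : ZMod n → M) :
    ∑ k : ZMod n, f (2 - k) = ∑ k : ZMod n, f k :=
  Equiv.sum_comp (Equiv.subLeft (2 : ZMod n)) f

lemma sum_sub1 {M : Type*} [AddCommMonoid M] (f : ZMod n → M) :
    ∑ k : ZMod n, f (1 - k) = ∑ k : ZMod n, f k :=
  Equiv.sum_comp (Equiv.subLeft (1 : ZMod n)) f

lemma Dz_sum (j : Fin s) : ∑ k : ZMod n, Dz n s t δ j k = 0 := by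
  unfold Dz
  rw [Finset.sum_sub_distrib, sum_sub2 n (fun k => δ (zv n s t j k))]
  ring

lemma Dz_anti (j : Fin s) (k : ZMod n) : Dz n s t δ j (2 - k) = -Dz n s t δ j k := by
  unfold Dz
  rw [sub_sub_cancel]
  ring

lemma Dxy_sum (hc2 : ∀ j : Fin t,
      (∑ i, δ (xv n s t j i)) ≡ (∑ i, δ (yv n s t j i)) [ZMOD (n : ℤ)]) (j : Fin t) :
    ∑ k : ZMod n, Dxy n s t δ j k = 0 := by
  unfold Dxy
  rw [Finset.sum_add_distrib, Finset.sum_sub_distrib, sum_sub2 n (fun k => δ (yv n s t j k)),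
    Finset.sum_const, Finset.card_univ]
  have hcard : (Fintype.card (ZMod n)) = n := ZMod.card n
  rw [hcard]
  have := gam_spec n s t δ hc2 j
  rw [nsmul_eq_mul]
  linarith [this]

def d1core : Vrt n s t → ℤ
  | Sum.inl (j, i) => psum (Dz n s t δ j) i + psum (Dz n s t δ j) (i0 n)
  | Sum.inr (Sum.inl (j, i)) => psum (Dxy n s t δ j) i
  | Sum.inr (Sum.inr (j, i)) => psum (Dxy n s t δ j) (1 - i)

def d2core : Vrt n s t → ℤ
  | Sum.inl (j, i) => δ (zv n s t j i) - psum (Dz n s t δ j) i - δ (zv n s t j 1)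
  | Sum.inr (Sum.inl (j, i)) => δ (xv n s t j i) - psum (Dxy n s t δ j) i
  | Sum.inr (Sum.inr (j, i)) => δ (xv n s t j (2 - i)) - psum (Dxy n s t δ j) (2 - i)

def uu : Vrt n s t → ℤ
  | Sum.inl (j, _) => if (j : ℕ) = 0 then 2 else 0
  | Sum.inr (Sum.inl (j, _)) => if s = 0 ∧ (j : ℕ) = 0 then 1 else 0
  | Sum.inr (Sum.inr (j, _)) => if s = 0 ∧ (j : ℕ) = 0 then 1 else 0

lemma uu_sig1 (v : Vrt n s t) : uu n s t (sig1 n s t v) = uu n s t v := by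
  rcases v with ⟨j,i⟩ | ⟨j,i⟩ | ⟨j,i⟩ <;> rfl

lemma uu_sig2 (v : Vrt n s t) : uu n s t (sig2 n s t v) = uu n s t v := by
  rcases v with ⟨j,i⟩ | ⟨j,i⟩ | ⟨j,i⟩ <;> rfl

lemma uu_rho (v : Vrt n s t) : uu n s t (rho n s t v) = uu n s t v := by
  rcases v with ⟨j,i⟩ | ⟨j,i⟩ | ⟨j,i⟩ <;> rfl

lemma uu_z_even (j : Fin s) (i : ZMod n) : Even (uu n s t (zv n s t j i)) := by
  show Even (if (j : ℕ) = 0 then (2:ℤ) else 0)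
  split
  · exact ⟨1, rfl⟩
  · exact Even.zero

lemma fin_ind_sum (m : ℕ) (c : ℤ) :
    ∑ j : Fin m, (if (j : ℕ) = 0 then c else 0) = if m = 0 then 0 else c := by
  cases m with
  | zero => simp
  | succ m' =>
    rw [Fin.sum_univ_succ]
    simp

lemma uu_sum (hst : ¬(s = 0 ∧ t = 0)) : ∑ v, uu n s t v = 2 * n := by
  rw [Fintype.sum_sum_type, Fintype.sum_sum_type, Fintype.sum_prod_type,
    Fintype.sum_prod_type, Fintype.sum_prod_type]
  have hcard : (Fintype.card (ZMod n)) = n := ZMod.card n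
  have hz : ∑ j : Fin s, ∑ _i : ZMod n, uu n s t (Sum.inl (j, _i))
      = (n : ℤ) * (if s = 0 then 0 else 2) := by
    have : ∀ j : Fin s, ∑ _i : ZMod n, uu n s t (Sum.inl (j, _i))
        = (n : ℤ) * (if (j : ℕ) = 0 then 2 else 0) := by
      intro j
      have hv : ∀ i : ZMod n, uu n s t (Sum.inl (j, i)) = if (j : ℕ) = 0 then (2:ℤ) else 0 :=
        fun i => rfl
      rw [Finset.sum_congr rfl (fun i _ => hv i), Finset.sum_const, Finset.card_univ, hcard,
        nsmul_eq_mul]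
    rw [Finset.sum_congr rfl (fun j _ => this j), ← Finset.mul_sum, fin_ind_sum]
  have hxy : ∀ f : Fin t × ZMod n → ℤ, (∀ j i, f (j, i) = if s = 0 ∧ (j : ℕ) = 0 then 1 else 0) →
      ∑ j : Fin t, ∑ i : ZMod n, f (j, i) = (n : ℤ) * (if s = 0 then (if t = 0 then 0 else 1) else 0) := by
    intro f hf
    have : ∀ j : Fin t, ∑ i : ZMod n, f (j, i)
        = (n : ℤ) * (if s = 0 then (if (j : ℕ) = 0 then 1 else 0) else 0) := by
      intro j
      have : ∀ i : ZMod n, f (j, i) = if s = 0 then (if (j : ℕ) = 0 then (1:ℤ) else 0) else 0 := by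
        intro i
        rw [hf]
        by_cases h1 : s = 0 <;> by_cases h2 : (j : ℕ) = 0 <;> simp [h1, h2]
      rw [Finset.sum_congr rfl (fun i _ => this i), Finset.sum_const, Finset.card_univ, hcard,
        nsmul_eq_mul]
    rw [Finset.sum_congr rfl (fun j _ => this j), ← Finset.mul_sum]
    by_cases h1 : s = 0
    · simp only [h1, if_true]
      rw [fin_ind_sum]
    · simp [h1]
  rw [hz, hxy (fun p => uu n s t (Sum.inr (Sum.inl p))) (fun j i => rfl),
    hxy (fun p => uu n s t (Sum.inr (Sum.inr p))) (fun j i => rfl)]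
  by_cases h1 : s = 0
  · have h2 : t ≠ 0 := fun h => hst ⟨h1, h⟩
    simp [h1, h2]
    ring
  · simp [h1]
    ring

end Bwd
end MemPMain
namespace MemPMain
open MemPAux

section Bwd2
variable (n s t : ℕ) [NeZero n] (δ : Vrt n s t → ℤ)

lemma d1core_sig1 (v : Vrt n s t) :
    d1core n s t δ (sig1 n s t v) = d1core n s t δ v := by
  rcases v with ⟨j,i⟩ | ⟨j,i⟩ | ⟨j,i⟩
  · show psum (Dz n s t δ j) (1 - i) + _ = psum (Dz n s t δ j) i + _
    rw [psum_symm (Dz n s t δ j) (Dz_sum n s t δ j) (Dz_anti n s t δ j) i]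
  · show psum (Dxy n s t δ j) (1 - (1 - i)) = psum (Dxy n s t δ j) i
    rw [sub_sub_cancel]
  · rfl

lemma d1core_even_fixed (hodd : Odd n) (v : Vrt n s t) (h : sig1 n s t v = v) :
    Even (d1core n s t δ v) := by
  obtain ⟨j, rfl⟩ := sig1_fixed n s t hodd v h
  show Even (psum (Dz n s t δ j) (i0 n) + psum (Dz n s t δ j) (i0 n))
  exact ⟨psum (Dz n s t δ j) (i0 n), rfl⟩

-- key identity: psum Δ (2 - i) = psum Δ i - Δ i, given symmetry hypotheses
lemma psum_two_sub (Δ : ZMod n → ℤ) (hΔ : ∑ k : ZMod n, Δ k = 0)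
    (hanti : ∀ k, Δ (2 - k) = -Δ k) (i : ZMod n) :
    psum Δ (2 - i) = psum Δ i - Δ i := by
  have h1 : psum Δ (2 - i) = psum Δ (i - 1) := by
    have : (2 : ZMod n) - i = 1 - (i - 1) := by ring
    rw [this, psum_symm Δ hΔ hanti]
  have h2 : psum Δ ((i - 1) + 1) = psum Δ (i - 1) + Δ ((i - 1) + 1) := psum_succ Δ hΔ (i - 1)
  have h3 : (i - 1) + 1 = i := by ring
  rw [h3] at h2
  rw [h1]
  linarith [h2]

lemma d2core_sig2 (hc2 : ∀ j : Fin t,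
      (∑ i, δ (xv n s t j i)) ≡ (∑ i, δ (yv n s t j i)) [ZMOD (n : ℤ)]) (v : Vrt n s t) :
    d2core n s t δ (sig2 n s t v) = d2core n s t δ v := by
  rcases v with ⟨j,i⟩ | ⟨j,i⟩ | ⟨j,i⟩
  · show δ (zv n s t j (2 - i)) - psum (Dz n s t δ j) (2 - i) - δ (zv n s t j 1)
      = δ (zv n s t j i) - psum (Dz n s t δ j) i - δ (zv n s t j 1)
    rw [psum_two_sub n (Dz n s t δ j) (Dz_sum n s t δ j) (Dz_anti n s t δ j) i]
    show δ (zv n s t j (2 - i)) - (psum (Dz n s t δ j) i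
      - (δ (zv n s t j i) - δ (zv n s t j (2 - i)))) - δ (zv n s t j 1) = _
    ring
  · show δ (xv n s t j (2 - (2 - i))) - psum (Dxy n s t δ j) (2 - (2 - i))
      = δ (xv n s t j i) - psum (Dxy n s t δ j) i
    rw [sub_sub_cancel]
  · rfl

lemma psum_Dz_one (j : Fin s) : psum (Dz n s t δ j) 1 = 0 := by
  rw [psum_one (Dz n s t δ j) (Dz_sum n s t δ j)]
  show δ (zv n s t j 1) - δ (zv n s t j (2 - 1)) = 0
  norm_num

lemma d2core_even_fixed (hodd : Odd n) (v : Vrt n s t) (h : sig2 n s t v = v) :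
    Even (d2core n s t δ v) := by
  obtain ⟨j, rfl⟩ := sig2_fixed n s t hodd v h
  show Even (δ (zv n s t j 1) - psum (Dz n s t δ j) 1 - δ (zv n s t j 1))
  rw [psum_Dz_one]
  exact ⟨0, by ring⟩

-- residual values
lemma d3_z (j : Fin s) (i : ZMod n) :
    δ (zv n s t j i) - d1core n s t δ (zv n s t j i) - d2core n s t δ (zv n s t j i)
      = δ (zv n s t j 1) - psum (Dz n s t δ j) (i0 n) := by
  show δ (zv n s t j i) - (psum (Dz n s t δ j) i + psum (Dz n s t δ j) (i0 n))
      - (δ (zv n s t j i) - psum (Dz n s t δ j) i - δ (zv n s t j 1)) = _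
  ring

lemma d3_x (j : Fin t) (i : ZMod n) :
    δ (xv n s t j i) - d1core n s t δ (xv n s t j i) - d2core n s t δ (xv n s t j i) = 0 := by
  show δ (xv n s t j i) - psum (Dxy n s t δ j) i
      - (δ (xv n s t j i) - psum (Dxy n s t δ j) i) = 0
  ring

lemma d3_y (hc2 : ∀ j : Fin t,
      (∑ i, δ (xv n s t j i)) ≡ (∑ i, δ (yv n s t j i)) [ZMOD (n : ℤ)]) (j : Fin t) (i : ZMod n) :
    δ (yv n s t j i) - d1core n s t δ (yv n s t j i) - d2core n s t δ (yv n s t j i)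
      = gam n s t δ j := by
  show δ (yv n s t j i) - psum (Dxy n s t δ j) (1 - i)
      - (δ (xv n s t j (2 - i)) - psum (Dxy n s t δ j) (2 - i)) = gam n s t δ j
  have h1 : psum (Dxy n s t δ j) ((1 - i) + 1)
      = psum (Dxy n s t δ j) (1 - i) + Dxy n s t δ j ((1 - i) + 1) :=
    psum_succ (Dxy n s t δ j) (Dxy_sum n s t δ hc2 j) (1 - i)
  have h2 : (1 : ZMod n) - i + 1 = 2 - i := by ring
  rw [h2] at h1
  rw [h1]
  show δ (yv n s t j i) - psum (Dxy n s t δ j) (1 - i) - (δ (xv n s t j (2 - i))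
    - (psum (Dxy n s t δ j) (1 - i) + (δ (xv n s t j (2-i)) - δ (yv n s t j (2 - (2 - i)))
      + gam n s t δ j))) = gam n s t δ j
  rw [sub_sub_cancel]
  ring

end Bwd2
end MemPMain
namespace MemPMain
open MemPAux

section Bwd3
variable (n s t : ℕ) [NeZero n] (δ : Vrt n s t → ℤ)

def iz (j : Fin s) : ZMod n := ∑ k : ZMod n, k * ((δ (zv n s t j k) : ℤ) : ZMod n)
def ix (j : Fin t) : ZMod n := ∑ k : ZMod n, k * ((δ (xv n s t j k) : ℤ) : ZMod n)
def iy (j : Fin t) : ZMod n := ∑ k : ZMod n, k * ((δ (yv n s t j k) : ℤ) : ZMod n)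
def dz (j : Fin s) : ZMod n := ((∑ i, δ (zv n s t j i) : ℤ) : ZMod n)
def dx (j : Fin t) : ZMod n := ((∑ i, δ (xv n s t j i) : ℤ) : ZMod n)
def dy (j : Fin t) : ZMod n := ((∑ i, δ (yv n s t j i) : ℤ) : ZMod n)

lemma sum_two_sub_mul (g : ZMod n → ℤ) :
    ∑ k : ZMod n, (k : ZMod n) * ((g (2 - k) : ℤ) : ZMod n)
      = 2 * ((∑ k, g k : ℤ) : ZMod n) - ∑ k : ZMod n, (k : ZMod n) * ((g k : ℤ) : ZMod n) := by
  have h1 : ∑ k : ZMod n, (k : ZMod n) * ((g (2 - k) : ℤ) : ZMod n)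
      = ∑ m : ZMod n, ((2 : ZMod n) - m) * ((g m : ℤ) : ZMod n) := by
    refine Fintype.sum_equiv (Equiv.subLeft (2 : ZMod n)) _ _ ?_
    intro k
    simp only [Equiv.subLeft_apply, sub_sub_cancel]
  rw [h1]
  have h2 : ∀ m : ZMod n, ((2 : ZMod n) - m) * ((g m : ℤ) : ZMod n)
      = 2 * ((g m : ℤ) : ZMod n) - m * ((g m : ℤ) : ZMod n) := fun m => by ring
  rw [Finset.sum_congr rfl (fun m _ => h2 m), Finset.sum_sub_distrib, ← Finset.mul_sum]
  push_cast
  ring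

lemma sumk_Dz (j : Fin s) :
    ∑ k : ZMod n, (k : ZMod n) * ((Dz n s t δ j k : ℤ) : ZMod n)
      = 2 * iz n s t δ j - 2 * dz n s t δ j := by
  unfold Dz iz dz
  have h : ∀ k : ZMod n, (k : ZMod n)
        * (((δ (zv n s t j k) - δ (zv n s t j (2 - k)) : ℤ)) : ZMod n)
      = k * ((δ (zv n s t j k) : ℤ) : ZMod n) - k * ((δ (zv n s t j (2-k)) : ℤ) : ZMod n) := by
    intro k
    push_cast
    ring
  rw [Finset.sum_congr rfl (fun k _ => h k), Finset.sum_sub_distrib,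
    sum_two_sub_mul n (fun k => δ (zv n s t j k))]
  ring

lemma sumk_Dxy (hodd : Odd n) (j : Fin t) :
    ∑ k : ZMod n, (k : ZMod n) * ((Dxy n s t δ j k : ℤ) : ZMod n)
      = ix n s t δ j + iy n s t δ j - 2 * dy n s t δ j := by
  unfold Dxy ix iy dy
  have h : ∀ k : ZMod n, (k : ZMod n)
        * (((δ (xv n s t j k) - δ (yv n s t j (2 - k)) + gam n s t δ j : ℤ)) : ZMod n)
      = k * ((δ (xv n s t j k) : ℤ) : ZMod n) - k * ((δ (yv n s t j (2-k)) : ℤ) : ZMod n)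
        + k * ((gam n s t δ j : ℤ) : ZMod n) := by
    intro k
    push_cast
    ring
  rw [Finset.sum_congr rfl (fun k _ => h k), Finset.sum_add_distrib, Finset.sum_sub_distrib,
    sum_two_sub_mul n (fun k => δ (yv n s t j k)), ← Finset.sum_mul, sum_univ_zmod hodd,
    zero_mul]
  ring

lemma D1_eq : ∑ v, d1core n s t δ v
    = ∑ j : Fin s, ((∑ i : ZMod n, psum (Dz n s t δ j) i) + (n : ℤ) * psum (Dz n s t δ j) (i0 n))
      + 2 * ∑ j : Fin t, ∑ i : ZMod n, psum (Dxy n s t δ j) i := by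
  rw [Fintype.sum_sum_type, Fintype.sum_sum_type, Fintype.sum_prod_type,
    Fintype.sum_prod_type, Fintype.sum_prod_type]
  have hz : ∀ j : Fin s, ∑ i : ZMod n, d1core n s t δ (Sum.inl (j, i))
      = (∑ i : ZMod n, psum (Dz n s t δ j) i) + (n : ℤ) * psum (Dz n s t δ j) (i0 n) := by
    intro j
    have hv : ∀ i : ZMod n, d1core n s t δ (Sum.inl (j, i))
        = psum (Dz n s t δ j) i + psum (Dz n s t δ j) (i0 n) := fun i => rfl
    rw [Finset.sum_congr rfl (fun i _ => hv i), Finset.sum_add_distrib, Finset.sum_const,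
      Finset.card_univ, ZMod.card, nsmul_eq_mul]
  have hx : ∀ j : Fin t, ∑ i : ZMod n, d1core n s t δ (Sum.inr (Sum.inl (j, i)))
      = ∑ i : ZMod n, psum (Dxy n s t δ j) i := fun j => rfl
  have hy : ∀ j : Fin t, ∑ i : ZMod n, d1core n s t δ (Sum.inr (Sum.inr (j, i)))
      = ∑ i : ZMod n, psum (Dxy n s t δ j) i := by
    intro j
    have hv : ∀ i : ZMod n, d1core n s t δ (Sum.inr (Sum.inr (j, i)))
        = psum (Dxy n s t δ j) (1 - i) := fun i => rfl
    rw [Finset.sum_congr rfl (fun i _ => hv i), sum_sub1 n (fun i => psum (Dxy n s t δ j) i)]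
  rw [Finset.sum_congr rfl (fun j _ => hz j), Finset.sum_congr rfl (fun j _ => hx j),
    Finset.sum_congr rfl (fun j _ => hy j)]
  ring

lemma D1_even (hodd : Odd n) : Even (∑ v, d1core n s t δ v) := by
  rw [D1_eq]
  apply Even.add
  · apply Finset.even_sum
    intro j _
    have h1 : Even ((∑ i : ZMod n, psum (Dz n s t δ j) i) - psum (Dz n s t δ j) (i0 n)) := by
      refine sum_parity (psum (Dz n s t δ j)) (fun i => 1 - i) (i0 n) ?_ ?_ ?_ ?_
      · intro i; show 1 - (1 - i) = i; rw [sub_sub_cancel]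
      · intro i hi
        exact eq_i0 n hodd (by linear_combination -hi)
      · have := two_i0 n hodd
        linear_combination -this
      · exact psum_symm (Dz n s t δ j) (Dz_sum n s t δ j) (Dz_anti n s t δ j)
    have h2 : Even (((n : ℤ) + 1) * psum (Dz n s t δ j) (i0 n)) := by
      obtain ⟨k, hk⟩ := hodd
      exact ⟨(k + 1) * psum (Dz n s t δ j) (i0 n), by push_cast [hk]; ring⟩
    obtain ⟨a, ha⟩ := h1
    obtain ⟨b, hb⟩ := h2
    exact ⟨a + b, by linarith [ha, hb]⟩
  · exact ⟨∑ j : Fin t, ∑ i : ZMod n, psum (Dxy n s t δ j) i, by ring⟩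

lemma D1_modn (hodd : Odd n)
    (hδ : ∑ v, δ v = 0)
    (hc1 : (∑ v, idx n s t v * ((δ v : ℤ) : ZMod n)) = 0)
    (hc2 : ∀ j : Fin t,
      (∑ i, δ (xv n s t j i)) ≡ (∑ i, δ (yv n s t j i)) [ZMOD (n : ℤ)]) :
    (((∑ v, d1core n s t δ v : ℤ)) : ZMod n) = 0 := by
  -- split the hypotheses
  have hsplit1 : ∑ j : Fin s, iz n s t δ j + (∑ j : Fin t, ix n s t δ j
      + ∑ j : Fin t, iy n s t δ j) = 0 := by
    rw [← hc1]
    rw [Fintype.sum_sum_type, Fintype.sum_sum_type, Fintype.sum_prod_type,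
      Fintype.sum_prod_type, Fintype.sum_prod_type]
    rfl
  have hsplit2 : ∑ j : Fin s, dz n s t δ j + (∑ j : Fin t, dx n s t δ j
      + ∑ j : Fin t, dy n s t δ j) = 0 := by
    unfold dz dx dy
    have h0 : ((∑ v, δ v : ℤ) : ZMod n) = 0 := by rw [hδ]; simp
    rw [Fintype.sum_sum_type, Fintype.sum_sum_type, Fintype.sum_prod_type,
      Fintype.sum_prod_type, Fintype.sum_prod_type] at h0
    push_cast at h0 ⊢
    exact h0
  have hsplit3 : ∑ j : Fin t, dx n s t δ j = ∑ j : Fin t, dy n s t δ j := by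
    refine Finset.sum_congr rfl (fun j _ => ?_)
    exact (ZMod.intCast_eq_intCast_iff _ _ _).2 (hc2 j)
  -- cast D1
  have hz' : ∀ j : Fin s, ∑ i : ZMod n, ((psum (Dz n s t δ j) i : ℤ) : ZMod n)
      = 2 * dz n s t δ j - 2 * iz n s t δ j := by
    intro j
    have h := psum_total (Dz n s t δ j) (Dz_sum n s t δ j)
    rw [sumk_Dz n s t δ j] at h
    push_cast at h
    rw [h]
    ring
  have hxy' : ∀ j : Fin t, ∑ i : ZMod n, ((psum (Dxy n s t δ j) i : ℤ) : ZMod n)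
      = 2 * dy n s t δ j - ix n s t δ j - iy n s t δ j := by
    intro j
    have h := psum_total (Dxy n s t δ j) (Dxy_sum n s t δ hc2 j)
    rw [sumk_Dxy n s t δ hodd j] at h
    push_cast at h
    rw [h]
    ring
  rw [D1_eq]
  push_cast
  simp only [ZMod.natCast_self, zero_mul, add_zero]
  rw [Finset.sum_congr rfl (fun j _ => hz' j), Finset.sum_congr rfl (fun j _ => hxy' j),
    Finset.sum_sub_distrib, Finset.sum_sub_distrib, Finset.sum_sub_distrib,
    ← Finset.mul_sum, ← Finset.mul_sum, ← Finset.mul_sum]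
  linear_combination (-2 : ZMod n) * hsplit1 + 2 * hsplit2 - 2 * hsplit3

end Bwd3
end MemPMain
namespace MemPMain
open MemPAux

section Bwd4
variable (n s t : ℕ) [NeZero n] (δ : Vrt n s t → ℤ)

lemma D2_eq : ∑ v, d2core n s t δ v
    = ∑ j : Fin s, ∑ i : ZMod n, d2core n s t δ (zv n s t j i)
      + 2 * ∑ j : Fin t, ∑ i : ZMod n, (δ (xv n s t j i) - psum (Dxy n s t δ j) i) := by
  rw [Fintype.sum_sum_type, Fintype.sum_sum_type, Fintype.sum_prod_type,
    Fintype.sum_prod_type, Fintype.sum_prod_type]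
  have hx : ∀ j : Fin t, ∑ i : ZMod n, d2core n s t δ (Sum.inr (Sum.inl (j, i)))
      = ∑ i : ZMod n, (δ (xv n s t j i) - psum (Dxy n s t δ j) i) := fun j => rfl
  have hy : ∀ j : Fin t, ∑ i : ZMod n, d2core n s t δ (Sum.inr (Sum.inr (j, i)))
      = ∑ i : ZMod n, (δ (xv n s t j i) - psum (Dxy n s t δ j) i) := by
    intro j
    have hv : ∀ i : ZMod n, d2core n s t δ (Sum.inr (Sum.inr (j, i)))
        = (fun k => δ (xv n s t j k) - psum (Dxy n s t δ j) k) (2 - i) := fun i => rfl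
    rw [Finset.sum_congr rfl (fun i _ => hv i),
      sum_sub2 n (fun k => δ (xv n s t j k) - psum (Dxy n s t δ j) k)]
  rw [Finset.sum_congr rfl (fun j _ => hx j), Finset.sum_congr rfl (fun j _ => hy j),
    show (∑ j : Fin s, ∑ i : ZMod n, d2core n s t δ (Sum.inl (j, i)))
      = ∑ j : Fin s, ∑ i : ZMod n, d2core n s t δ (zv n s t j i) from rfl]
  ring

lemma D2_even (hodd : Odd n) (hc2 : ∀ j : Fin t,
      (∑ i, δ (xv n s t j i)) ≡ (∑ i, δ (yv n s t j i)) [ZMOD (n : ℤ)]) :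
    Even (∑ v, d2core n s t δ v) := by
  rw [D2_eq]
  apply Even.add
  · apply Finset.even_sum
    intro j _
    have h1 : Even ((∑ i : ZMod n, d2core n s t δ (zv n s t j i))
        - d2core n s t δ (zv n s t j 1)) := by
      refine sum_parity (fun i => d2core n s t δ (zv n s t j i)) (fun i => 2 - i) 1 ?_ ?_ ?_ ?_
      · intro i; show 2 - (2 - i) = i; rw [sub_sub_cancel]
      · intro i hi
        exact eq_one_of n hodd (by linear_combination -hi)
      · show (2 : ZMod n) - 1 = 1; norm_num
      · intro i
        exact d2core_sig2 n s t δ hc2 (zv n s t j i)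
    have h2 : d2core n s t δ (zv n s t j 1) = 0 := by
      show δ (zv n s t j 1) - psum (Dz n s t δ j) 1 - δ (zv n s t j 1) = 0
      rw [psum_Dz_one]
      ring
    rw [h2, sub_zero] at h1
    exact h1
  · exact ⟨∑ j : Fin t, ∑ i : ZMod n, (δ (xv n s t j i) - psum (Dxy n s t δ j) i), by ring⟩

lemma D3_eq (hc2 : ∀ j : Fin t,
      (∑ i, δ (xv n s t j i)) ≡ (∑ i, δ (yv n s t j i)) [ZMOD (n : ℤ)]) :
    ∑ v, (δ v - d1core n s t δ v - d2core n s t δ v)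
      = (n : ℤ) * ((∑ j : Fin s, (δ (zv n s t j 1) - psum (Dz n s t δ j) (i0 n)))
          + ∑ j : Fin t, gam n s t δ j) := by
  rw [Fintype.sum_sum_type, Fintype.sum_sum_type, Fintype.sum_prod_type,
    Fintype.sum_prod_type, Fintype.sum_prod_type]
  have hz : ∀ j : Fin s, ∑ i : ZMod n,
      (δ (Sum.inl (j, i)) - d1core n s t δ (Sum.inl (j, i)) - d2core n s t δ (Sum.inl (j, i)))
      = (n : ℤ) * (δ (zv n s t j 1) - psum (Dz n s t δ j) (i0 n)) := by
    intro j
    show ∑ i : ZMod n, (δ (zv n s t j i) - d1core n s t δ (zv n s t j i)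
      - d2core n s t δ (zv n s t j i)) = _
    rw [Finset.sum_congr rfl (fun i _ => d3_z n s t δ j i), Finset.sum_const,
      Finset.card_univ, ZMod.card, nsmul_eq_mul]
  have hx : ∀ j : Fin t, ∑ i : ZMod n,
      (δ (Sum.inr (Sum.inl (j, i))) - d1core n s t δ (Sum.inr (Sum.inl (j, i)))
        - d2core n s t δ (Sum.inr (Sum.inl (j, i)))) = 0 := by
    intro j
    show ∑ i : ZMod n, (δ (xv n s t j i) - d1core n s t δ (xv n s t j i)
      - d2core n s t δ (xv n s t j i)) = 0
    rw [Finset.sum_congr rfl (fun i _ => d3_x n s t δ j i), Finset.sum_const, smul_zero]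
  have hy : ∀ j : Fin t, ∑ i : ZMod n,
      (δ (Sum.inr (Sum.inr (j, i))) - d1core n s t δ (Sum.inr (Sum.inr (j, i)))
        - d2core n s t δ (Sum.inr (Sum.inr (j, i)))) = (n : ℤ) * gam n s t δ j := by
    intro j
    show ∑ i : ZMod n, (δ (yv n s t j i) - d1core n s t δ (yv n s t j i)
      - d2core n s t δ (yv n s t j i)) = _
    rw [Finset.sum_congr rfl (fun i _ => d3_y n s t δ hc2 j i), Finset.sum_const,
      Finset.card_univ, ZMod.card, nsmul_eq_mul]
  rw [Finset.sum_congr rfl (fun j _ => hz j), Finset.sum_congr rfl (fun j _ => hx j),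
    Finset.sum_congr rfl (fun j _ => hy j), ← Finset.mul_sum, ← Finset.mul_sum]
  simp only [Finset.sum_const_zero]
  ring

lemma D2_modn (hodd : Odd n)
    (hδ : ∑ v, δ v = 0)
    (hc1 : (∑ v, idx n s t v * ((δ v : ℤ) : ZMod n)) = 0)
    (hc2 : ∀ j : Fin t,
      (∑ i, δ (xv n s t j i)) ≡ (∑ i, δ (yv n s t j i)) [ZMOD (n : ℤ)]) :
    (((∑ v, d2core n s t δ v : ℤ)) : ZMod n) = 0 := by
  have hsplit : ∑ v, d2core n s t δ v
      = ∑ v, δ v - ∑ v, d1core n s t δ v - ∑ v, (δ v - d1core n s t δ v - d2core n s t δ v) := by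
    rw [← Finset.sum_sub_distrib, ← Finset.sum_sub_distrib]
    refine Finset.sum_congr rfl (fun v _ => by ring)
  rw [hsplit, hδ, D3_eq n s t δ hc2]
  have h1 := D1_modn n s t δ hodd hδ hc1 hc2
  push_cast at h1 ⊢
  rw [h1, ZMod.natCast_self]
  ring

end Bwd4
end MemPMain


/-- **membership in 𝒫 = 𝒫₁ + 𝒫₂ + 𝒫₃, n odd.** -/
theorem mem_P_iff_of_odd (n s t : ℕ) [NeZero n] (hn : 3 ≤ n) (hodd : Odd n)
    (δ : Vrt n s t → ℤ) (hδ : δ ∈ DivD n s t) :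
    δ ∈ Pgp1 n s t ⊔ Pgp2 n s t ⊔ Pgp3 n s t ↔
      ((∑ v, idx n s t v * ((δ v : ℤ) : ZMod n)) = 0 ∧
       (∀ j : Fin t, (∑ i, δ (xv n s t j i)) ≡ (∑ i, δ (yv n s t j i)) [ZMOD (n : ℤ)])) := by
  classical
  have hδ' : ∑ v, δ v = 0 := hδ
  constructor
  · -- forward direction
    intro h
    obtain ⟨w, hw, c, hcm, hwc⟩ := AddSubgroup.mem_sup.1 h
    obtain ⟨a, ham, b, hbm, hab⟩ := AddSubgroup.mem_sup.1 hw
    have ham' : (∑ v, a v = 0) ∧ (∀ v, a (sig1 n s t v) = a v) ∧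
        (∀ v, sig1 n s t v = v → Even (a v)) := ham
    have hbm' : (∑ v, b v = 0) ∧ (∀ v, b (sig2 n s t v) = b v) ∧
        (∀ v, sig2 n s t v = v → Even (b v)) := hbm
    have hcm' : (∑ v, c v = 0) ∧ (∀ v, c (rho n s t v) = c v) := hcm
    obtain ⟨ha0, ha1, -⟩ := ham'
    obtain ⟨hb0, hb1, -⟩ := hbm'
    obtain ⟨-, hc1'⟩ := hcm'
    have hδeq : ∀ v, δ v = a v + b v + c v := by
      intro v
      rw [← hwc, ← hab]
      rfl
    constructor
    · have e : ∀ v, idx n s t v * ((δ v : ℤ) : ZMod n)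
          = idx n s t v * ((a v : ℤ) : ZMod n) + idx n s t v * ((b v : ℤ) : ZMod n)
            + idx n s t v * ((c v : ℤ) : ZMod n) := by
        intro v
        rw [hδeq v]
        push_cast
        ring
      rw [Finset.sum_congr rfl (fun v _ => e v), Finset.sum_add_distrib, Finset.sum_add_distrib,
        MemPMain.cond1_P1 n s t hodd a ha0 ha1, MemPMain.cond1_P2 n s t hodd b hb0 hb1,
        MemPMain.cond1_P3 n s t hodd c hc1']
      ring
    · intro j
      have ex : ∑ i, δ (xv n s t j i)
          = ∑ i, a (xv n s t j i) + ∑ i, b (xv n s t j i) + ∑ i, c (xv n s t j i) := by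
        rw [Finset.sum_congr rfl (fun i _ => hδeq (xv n s t j i)), Finset.sum_add_distrib,
          Finset.sum_add_distrib]
      have ey : ∑ i, δ (yv n s t j i)
          = ∑ i, a (yv n s t j i) + ∑ i, b (yv n s t j i) + ∑ i, c (yv n s t j i) := by
        rw [Finset.sum_congr rfl (fun i _ => hδeq (yv n s t j i)), Finset.sum_add_distrib,
          Finset.sum_add_distrib]
      rw [ex, ey]
      refine Int.ModEq.add (Int.ModEq.add ?_ ?_) (MemPMain.cond2_P3 n s t c hc1' j)
      · rw [MemPMain.cond2_P1 n s t a ha1 j]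
      · rw [MemPMain.cond2_P2 n s t b hb1 j]
  · -- backward direction
    rintro ⟨hc1, hc2⟩
    by_cases hst : s = 0 ∧ t = 0
    · obtain ⟨rfl, rfl⟩ := hst
      have hemp : IsEmpty (Vrt n 0 0) := by
        constructor
        rintro (⟨j, -⟩ | ⟨j, -⟩ | ⟨j, -⟩) <;> exact j.elim0
      have hzero : δ = 0 := funext fun v => (hemp.false v).elim
      rw [hzero]
      exact zero_mem _
    · -- main construction
      have hcop : IsCoprime (2 : ℤ) (n : ℤ) := by
        have h := Nat.isCoprime_iff_coprime.2 (Nat.coprime_two_left.2 hodd)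
        exact_mod_cast h
      obtain ⟨m1, hm1⟩ : (2 * (n : ℤ)) ∣ ∑ v, MemPMain.d1core n s t δ v := by
        refine hcop.mul_dvd ?_ ?_
        · exact even_iff_two_dvd.1 (MemPMain.D1_even n s t δ hodd)
        · exact (ZMod.intCast_zmod_eq_zero_iff_dvd _ n).1
            (MemPMain.D1_modn n s t δ hodd hδ' hc1 hc2)
      obtain ⟨m2, hm2⟩ : (2 * (n : ℤ)) ∣ ∑ v, MemPMain.d2core n s t δ v := by
        refine hcop.mul_dvd ?_ ?_
        · exact even_iff_two_dvd.1 (MemPMain.D2_even n s t δ hodd hc2)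
        · exact (ZMod.intCast_zmod_eq_zero_iff_dvd _ n).1
            (MemPMain.D2_modn n s t δ hodd hδ' hc1 hc2)
      set a1 : Vrt n s t → ℤ := fun v => MemPMain.d1core n s t δ v - m1 * MemPMain.uu n s t v
        with ha1def
      set a2 : Vrt n s t → ℤ := fun v => MemPMain.d2core n s t δ v - m2 * MemPMain.uu n s t v
        with ha2def
      set a3 : Vrt n s t → ℤ := fun v => δ v - a1 v - a2 v with ha3def
      have hsum1 : ∑ v, a1 v = 0 := by
        rw [ha1def]
        rw [Finset.sum_sub_distrib, ← Finset.mul_sum, MemPMain.uu_sum n s t hst, hm1]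
        ring
      have hsum2 : ∑ v, a2 v = 0 := by
        rw [ha2def]
        rw [Finset.sum_sub_distrib, ← Finset.mul_sum, MemPMain.uu_sum n s t hst, hm2]
        ring
      have hP1 : a1 ∈ Pgp1 n s t := by
        refine ⟨hsum1, fun v => ?_, fun v hv => ?_⟩
        · show MemPMain.d1core n s t δ (sig1 n s t v) - m1 * MemPMain.uu n s t (sig1 n s t v)
            = MemPMain.d1core n s t δ v - m1 * MemPMain.uu n s t v
          rw [MemPMain.d1core_sig1, MemPMain.uu_sig1]
        · obtain ⟨j, rfl⟩ := MemPMain.sig1_fixed n s t hodd v hv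
          have h1 := MemPMain.d1core_even_fixed n s t δ hodd _ hv
          have h2 := MemPMain.uu_z_even n s t j (MemPMain.i0 n)
          exact h1.sub (h2.mul_left m1)
      have hP2 : a2 ∈ Pgp2 n s t := by
        refine ⟨hsum2, fun v => ?_, fun v hv => ?_⟩
        · show MemPMain.d2core n s t δ (sig2 n s t v) - m2 * MemPMain.uu n s t (sig2 n s t v)
            = MemPMain.d2core n s t δ v - m2 * MemPMain.uu n s t v
          rw [MemPMain.d2core_sig2 n s t δ hc2, MemPMain.uu_sig2]
        · obtain ⟨j, rfl⟩ := MemPMain.sig2_fixed n s t hodd v hv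
          have h1 := MemPMain.d2core_even_fixed n s t δ hodd _ hv
          have h2 := MemPMain.uu_z_even n s t j 1
          exact h1.sub (h2.mul_left m2)
      have hd3rho : ∀ v, δ (rho n s t v) - MemPMain.d1core n s t δ (rho n s t v)
          - MemPMain.d2core n s t δ (rho n s t v)
          = δ v - MemPMain.d1core n s t δ v - MemPMain.d2core n s t δ v := by
        rintro (⟨j, i⟩ | ⟨j, i⟩ | ⟨j, i⟩)
        · rw [show rho n s t (Sum.inl (j, i)) = zv n s t j (i + 1) from MemPMain.rho_z n s t j i,
            MemPMain.d3_z n s t δ j (i + 1)]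
          exact (MemPMain.d3_z n s t δ j i).symm
        · rw [show rho n s t (Sum.inr (Sum.inl (j, i))) = xv n s t j (i + 1) from
            MemPMain.rho_x n s t j i, MemPMain.d3_x n s t δ j (i + 1)]
          exact (MemPMain.d3_x n s t δ j i).symm
        · rw [show rho n s t (Sum.inr (Sum.inr (j, i))) = yv n s t j (i + 1) from
            MemPMain.rho_y n s t j i, MemPMain.d3_y n s t δ hc2 j (i + 1)]
          exact (MemPMain.d3_y n s t δ hc2 j i).symm
      have hP3 : a3 ∈ Pgp3 n s t := by
        refine ⟨?_, fun v => ?_⟩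
        · rw [ha3def]
          rw [Finset.sum_sub_distrib, Finset.sum_sub_distrib, hδ', hsum1, hsum2]
          ring
        · have hval : ∀ v, a3 v = (δ v - MemPMain.d1core n s t δ v - MemPMain.d2core n s t δ v)
              + (m1 + m2) * MemPMain.uu n s t v := by
            intro v
            rw [ha3def, ha1def, ha2def]
            ring
          rw [hval, hval, MemPMain.uu_rho, hd3rho]
      have hδsplit : δ = a1 + a2 + a3 := by
        funext v
        show δ v = a1 v + a2 v + a3 v
        rw [ha3def]
        ring
      rw [hδsplit]
      exact add_mem (add_mem (AddSubgroup.mem_sup_left (AddSubgroup.mem_sup_left hP1))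
        (AddSubgroup.mem_sup_left (AddSubgroup.mem_sup_right hP2)))
        (AddSubgroup.mem_sup_right hP3)
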